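/- Let F be a continuous distribution function with F(x) < 1 for all x, and set H(x) = −log(1 − F(x)). Assume H is regularly varying at ∞ with index α > 0, and let hₙ satisfy H(hₙ) = log n. Then for every fixed z > 1 and every 0 < R < z − 1, with Zₙ = max{W₁,…,Wₙ} for i.i.d. Wᵢ with distribution F: lim_{n→∞} (1/log n) · log P( Zₙ / hₙ ≥ z ) exists and equals −(z^α − 1). -/

import Mathlib

open MeasureTheory Set Filter

/-- `maxFirst W n ω = max {W 0 ω, …, W (n-1) ω}` for `n ≥ 1` (junk value `W 0 ω` for `n = 0`). -/
noncomputable def maxFirst {Ω : Type*} (W : ℕ → Ω → ℝ) : ℕ → Ω → ℝ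
  | 0, ω => W 0 ω
  | n + 1, ω => max (maxFirst W n ω) (W n ω)


-- exp(-x) ≤ 1 - x + (3/4) x^2 for x ≥ 0
lemma aux_exp_neg_le (x : ℝ) (hx : 0 ≤ x) :
    Real.exp (-x) ≤ 1 - x + (3/4) * x ^ 2 := by
  have h1 : (1 + x / 2) ^ 2 ≤ Real.exp x := by
    have h := Real.add_one_le_exp (x / 2)
    have h2 : (1 + x / 2) ^ 2 ≤ (Real.exp (x / 2)) ^ 2 := by
      apply pow_le_pow_left₀ (by linarith) (by linarith)
    calc (1 + x / 2) ^ 2 ≤ (Real.exp (x / 2)) ^ 2 := h2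
      _ = Real.exp x := by rw [sq, ← Real.exp_add]; ring_nf
  have hpos : (0:ℝ) < (1 + x / 2) ^ 2 := by positivity
  have h3 : Real.exp (-x) ≤ ((1 + x / 2) ^ 2)⁻¹ := by
    rw [Real.exp_neg]
    exact inv_anti₀ hpos h1
  refine h3.trans ?_
  rw [inv_le_iff_one_le_mul₀ hpos]
  nlinarith [sq_nonneg x, sq_nonneg (x - 2/3), pow_le_pow_left₀ hx (le_refl x)]


lemma maxFirst_lt_iff {Ω : Type*} (W : ℕ → Ω → ℝ) (t : ℝ) :
    ∀ n (ω : Ω), maxFirst W (n + 1) ω < t ↔ ∀ i ∈ Finset.range (n + 1), W i ω < t := by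
  intro n
  induction n with
  | zero => intro ω; simp [maxFirst]
  | succ n ih =>
    intro ω
    constructor
    · intro hlt i hi
      rw [show maxFirst W (n+2) ω = max (maxFirst W (n+1) ω) (W (n+1) ω) from rfl,
        max_lt_iff] at hlt
      rcases Finset.mem_range.mp hi with hi'
      rcases Nat.lt_succ_iff_lt_or_eq.mp hi' with h' | h'
      · exact (ih ω).mp hlt.1 i (Finset.mem_range.mpr h')
      · subst h'; exact hlt.2
    · intro hall
      rw [show maxFirst W (n+2) ω = max (maxFirst W (n+1) ω) (W (n+1) ω) from rfl, max_lt_iff]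
      exact ⟨(ih ω).mpr fun i hi => hall i (Finset.mem_range.mpr
          (Nat.lt_succ_of_lt (Finset.mem_range.mp hi))),
        hall (n+1) (Finset.mem_range.mpr (Nat.lt_succ_self _))⟩

lemma measure_Iio_eq_ofReal (μ : Measure ℝ) [IsProbabilityMeasure μ]
    (F : ℝ → ℝ) (hF : ∀ x, F x = (μ (Iic x)).toReal) (hF_cont : Continuous F) (t : ℝ) :
    μ (Iio t) = ENNReal.ofReal (F t) := by
  have hIic : ∀ x, μ (Iic x) = ENNReal.ofReal (F x) := by
    intro x
    rw [hF x, ENNReal.ofReal_toReal (measure_ne_top μ _)]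
  set s : ℕ → Set ℝ := fun n => Iic (t - 1 / (n + 1)) with hs
  have hmono : Monotone s := by
    intro a b hab
    apply Iic_subset_Iic.mpr
    have : (1 : ℝ) / (b + 1) ≤ 1 / (a + 1) := by
      apply one_div_le_one_div_of_le (by positivity)
      exact_mod_cast by exact_mod_cast Nat.add_le_add_right hab 1
    linarith
  have hunion : ⋃ n, s n = Iio t := by
    ext x
    simp only [mem_iUnion, mem_Iic, mem_Iio, hs]
    constructor
    · rintro ⟨n, hn⟩
      have : (0:ℝ) < 1 / (n + 1) := by positivity
      linarith
    · intro hx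
      obtain ⟨n, hn⟩ := exists_nat_one_div_lt (sub_pos.mpr hx)
      exact ⟨n, by linarith⟩
  have h1 : Tendsto (fun n => μ (s n)) atTop (nhds (μ (Iio t))) := by
    rw [← hunion]
    exact tendsto_measure_iUnion_atTop hmono
  have h2 : Tendsto (fun n => μ (s n)) atTop (nhds (ENNReal.ofReal (F t))) := by
    simp only [hs, hIic]
    apply (ENNReal.continuous_ofReal.tendsto _).comp
    apply (hF_cont.tendsto _).comp
    have h3 : Tendsto (fun n : ℕ => (1:ℝ) / (n + 1)) atTop (nhds 0) :=
      tendsto_one_div_add_atTop_nhds_zero_nat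
    have h4 := (tendsto_const_nhds (x := t) (f := atTop)).sub h3
    simpa using h4
  exact tendsto_nhds_unique h1 h2


lemma maxFirst_set_eq {Ω : Type*} (W : ℕ → Ω → ℝ) (t : ℝ) (n : ℕ) :
    {ω | maxFirst W (n + 1) ω < t} = ⋂ i ∈ Finset.range (n + 1), W i ⁻¹' Iio t := by
  ext ω
  simp only [mem_setOf_eq, mem_iInter, mem_preimage, mem_Iio]
  exact maxFirst_lt_iff W t n ω

lemma measure_maxFirst_lt {Ω : Type*} [MeasurableSpace Ω] (P : Measure Ω)
    [IsProbabilityMeasure P] (W : ℕ → Ω → ℝ) (μ : Measure ℝ)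
    (hmeas : ∀ i, Measurable (W i))
    (hindep : ProbabilityTheory.iIndepFun W P)
    (hdist : ∀ i, Measure.map (W i) P = μ) (t : ℝ) (n : ℕ) :
    P {ω | maxFirst W (n + 1) ω < t} = (μ (Iio t)) ^ (n + 1) := by
  rw [maxFirst_set_eq]
  rw [hindep.measure_inter_preimage_eq_mul (Finset.range (n + 1))
    (sets := fun _ => Iio t) (fun i _ => measurableSet_Iio)]
  have : ∀ i, P (W i ⁻¹' Iio t) = μ (Iio t) := by
    intro i
    rw [← hdist i, Measure.map_apply (hmeas i) measurableSet_Iio]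
  simp [this]

theorem stmt_18 {Ω : Type*} [MeasurableSpace Ω] (P : Measure Ω) [IsProbabilityMeasure P]
    (W : ℕ → Ω → ℝ) (μ : Measure ℝ) [IsProbabilityMeasure μ]
    (hmeas : ∀ i, Measurable (W i))
    (hindep : ProbabilityTheory.iIndepFun W P)
    (hdist : ∀ i, Measure.map (W i) P = μ)
    (F : ℝ → ℝ) (hF : ∀ x, F x = (μ (Iic x)).toReal)
    (hF_cont : Continuous F) (hF_lt : ∀ x, F x < 1)
    (H : ℝ → ℝ) (hH : ∀ x, H x = -Real.log (1 - F x))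
    (α : ℝ) (hα : 0 < α)
    (hreg : ∀ x : ℝ, 0 < x → Tendsto (fun y : ℝ => H (x * y) / H y) atTop (nhds (x ^ α)))
    (h : ℕ → ℝ) (hh_pos : ∀ n : ℕ, 2 ≤ n → 0 < h n)
    (hh : ∀ n : ℕ, 2 ≤ n → H (h n) = Real.log n)
    (z : ℝ) (hz : 1 < z) :
    Tendsto (fun n : ℕ =>
        Real.log (P {ω | z ≤ maxFirst W n ω / h n}).toReal / Real.log n)
      atTop (nhds (-(z ^ α - 1))) := by
  have hz0 : 0 < z := lt_trans one_pos hz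
  have hF_nonneg : ∀ x, 0 ≤ F x := fun x => (hF x) ▸ ENNReal.toReal_nonneg
  have hFmono : Monotone F := fun a b hab => by
    rw [hF a, hF b]
    exact ENNReal.toReal_mono (measure_ne_top μ _)
      (measure_mono (Iic_subset_Iic.mpr hab))
  have hp_eq : ∀ x, Real.exp (-(H x)) = 1 - F x := by
    intro x
    rw [hH x, neg_neg, Real.exp_log (by linarith [hF_lt x])]
  have hHmono : Monotone H := by
    intro a b hab
    rw [hH a, hH b]
    have h1 : (0:ℝ) < 1 - F b := by linarith [hF_lt b]
    have h2 : Real.log (1 - F b) ≤ Real.log (1 - F a) :=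
      Real.log_le_log h1 (by linarith [hFmono hab])
    linarith
  have hlogn : Tendsto (fun n : ℕ => Real.log n) atTop atTop :=
    Real.tendsto_log_atTop.comp tendsto_natCast_atTop_atTop
  have h_tendsto : Tendsto h atTop atTop := by
    rw [tendsto_atTop]
    intro M
    filter_upwards [hlogn.eventually_gt_atTop (H M), eventually_ge_atTop 2] with n h1 h2
    by_contra hcon
    push_neg at hcon
    have := hHmono hcon.le
    rw [hh n h2] at this
    linarith
  have hzα : 1 < z ^ α := (Real.one_lt_rpow_iff_of_pos hz0).mpr (Or.inl ⟨hz, hα⟩)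
  -- main ratio limit
  have hA : Tendsto (fun n : ℕ => H (z * h n) / Real.log n) atTop (nhds (z ^ α)) := by
    have h1 := (hreg z hz0).comp h_tendsto
    apply h1.congr'
    filter_upwards [eventually_ge_atTop 2] with n hn
    simp only [Function.comp_apply, hh n hn]
  set p : ℕ → ℝ := fun n => Real.exp (-(H (z * h n))) with hp
  have hp_pos : ∀ n, 0 < p n := fun n => Real.exp_pos _
  have hlogp : ∀ n, Real.log (p n) = -(H (z * h n)) := fun n => Real.log_exp _
  have hL : Tendsto (fun n : ℕ => Real.log (p n) / Real.log n) atTop (nhds (-(z ^ α))) := by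
    have := hA.neg
    apply this.congr
    intro n
    rw [hlogp, neg_div]
  set g : ℕ → ℝ := fun n => (n : ℝ) * p n with hg
  have hg_pos : ∀ n : ℕ, 1 ≤ n → 0 < g n := by
    intro n hn
    exact mul_pos (by exact_mod_cast Nat.pos_of_ne_zero (by omega)) (hp_pos n)
  have hlogg : ∀ n : ℕ, 2 ≤ n → Real.log (g n) = Real.log n * (1 + Real.log (p n) / Real.log n) := by
    intro n hn
    have hn0 : ((n : ℝ)) ≠ 0 := by positivity
    have hlogn_ne : Real.log n ≠ 0 := by
      have : (1:ℝ) < n := by exact_mod_cast hn.trans_lt' one_lt_two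
      exact ne_of_gt (Real.log_pos this)
    rw [hg]
    rw [Real.log_mul hn0 (ne_of_gt (hp_pos n))]
    field_simp
  have hg0 : Tendsto g atTop (nhds 0) := by
    have hC : 1 + -(z ^ α) < 0 := by linarith
    have hmul : Tendsto (fun n : ℕ => Real.log n * (1 + Real.log (p n) / Real.log n))
        atTop atBot :=
      hlogn.atTop_mul_neg hC (tendsto_const_nhds.add hL)
    have hexp : Tendsto (fun n : ℕ => Real.exp (Real.log n * (1 + Real.log (p n) / Real.log n)))
        atTop (nhds 0) := Real.tendsto_exp_atBot.comp hmul
    apply hexp.congr'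
    filter_upwards [eventually_ge_atTop 2] with n hn
    rw [← hlogg n hn, Real.exp_log (hg_pos n (by omega))]
  -- probability formula
  have hFp : ∀ n : ℕ, F (z * h n) = 1 - p n := by
    intro n
    have := hp_eq (z * h n)
    rw [hp]; dsimp only; linarith
  have hprob : ∀ n : ℕ, 2 ≤ n →
      (P {ω | z ≤ maxFirst W n ω / h n}).toReal = 1 - (1 - p n) ^ n := by
    intro n hn
    obtain ⟨m, rfl⟩ : ∃ m, n = m + 1 := ⟨n - 1, by omega⟩
    set t := z * h (m + 1) with ht
    have hset : {ω | z ≤ maxFirst W (m + 1) ω / h (m + 1)}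
        = {ω | maxFirst W (m + 1) ω < t}ᶜ := by
      ext ω
      simp only [mem_setOf_eq, mem_compl_iff, not_lt, ht]
      rw [le_div_iff₀ (hh_pos _ hn)]
    have hmeas_set : MeasurableSet {ω | maxFirst W (m + 1) ω < t} := by
      rw [maxFirst_set_eq]
      exact MeasurableSet.biInter (Finset.countable_toSet _)
        (fun i _ => (hmeas i) measurableSet_Iio)
    have hPval : P {ω | maxFirst W (m + 1) ω < t} = (ENNReal.ofReal (F t)) ^ (m + 1) := by
      rw [measure_maxFirst_lt P W μ hmeas hindep hdist t m,
        measure_Iio_eq_ofReal μ F hF hF_cont]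
    have hle1 : (ENNReal.ofReal (F t)) ^ (m + 1) ≤ 1 := by
      apply pow_le_one' (ENNReal.ofReal_le_one.mpr (hF_lt t).le)
    rw [hset, prob_compl_eq_one_sub hmeas_set, hPval]
    rw [ENNReal.toReal_sub_of_le hle1 ENNReal.one_ne_top]
    rw [ENNReal.toReal_one, ENNReal.toReal_pow, ENNReal.toReal_ofReal (hF_nonneg t)]
    rw [ht, hFp (m + 1)]
  -- bounds on r n := 1 - (1 - p n)^n
  have hbounds : ∀ᶠ n : ℕ in atTop,
      g n / 4 ≤ 1 - (1 - p n) ^ n ∧ 1 - (1 - p n) ^ n ≤ g n := by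
    filter_upwards [eventually_ge_atTop 2, hg0.eventually_le_const (by norm_num : (0:ℝ) < 1)]
      with n hn hgle
    have hpn1 : p n ≤ 1 := by
      have := hFp n; have := hF_nonneg (z * h n); linarith
    have hp0 : 0 ≤ p n := (hp_pos n).le
    constructor
    · -- lower bound
      have h1 : (1 - p n) ^ n ≤ (Real.exp (-(p n))) ^ n := by
        apply pow_le_pow_left₀ (by linarith)
        linarith [Real.add_one_le_exp (-(p n))]
      have h2 : (Real.exp (-(p n))) ^ n = Real.exp (-(g n)) := by
        rw [← Real.exp_nat_mul]; ring_nf; rfl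
      have h3 : Real.exp (-(g n)) ≤ 1 - g n + (3/4) * g n ^ 2 :=
        aux_exp_neg_le (g n) (hg_pos n (by omega)).le
      have hgnn : 0 ≤ g n := (hg_pos n (by omega)).le
      nlinarith [h1, h2 ▸ h1]
    · -- upper bound
      have h1 : 1 + (n : ℝ) * (-(p n)) ≤ (1 + -(p n)) ^ n :=
        one_add_mul_le_pow (by linarith) n
      have : (1 : ℝ) - g n ≤ (1 - p n) ^ n := by
        rw [hg]; dsimp only
        calc (1:ℝ) - (n : ℝ) * p n = 1 + (n:ℝ) * (-(p n)) := by ring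
          _ ≤ (1 + -(p n)) ^ n := h1
          _ = (1 - p n) ^ n := by ring_nf
      linarith
  -- squeeze
  have hhi : Tendsto (fun n : ℕ => 1 + Real.log (p n) / Real.log n) atTop
      (nhds (-(z ^ α - 1))) := by
    have := tendsto_const_nhds (x := (1:ℝ)) (f := atTop (α := ℕ)) |>.add hL
    convert this using 2; ring
  have hlo : Tendsto (fun n : ℕ => 1 + Real.log (p n) / Real.log n - Real.log 4 / Real.log n)
      atTop (nhds (-(z ^ α - 1))) := by
    have h4 : Tendsto (fun n : ℕ => Real.log 4 / Real.log n) atTop (nhds 0) :=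
      tendsto_const_nhds.div_atTop hlogn
    have := hhi.sub h4
    simpa using this
  apply tendsto_of_tendsto_of_tendsto_of_le_of_le' hlo hhi
  · -- lower bound eventually
    filter_upwards [eventually_ge_atTop 2, hbounds] with n hn hb
    have hlogn_pos : 0 < Real.log n :=
      Real.log_pos (by exact_mod_cast hn.trans_lt' one_lt_two)
    have hr_pos : 0 < 1 - (1 - p n) ^ n := by
      have := hg_pos n (by omega); linarith [hb.1]
    have hg4pos : 0 < g n / 4 := by have := hg_pos n (by omega); linarith
    have h1 : Real.log (g n / 4) ≤ Real.log (1 - (1 - p n) ^ n) :=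
      Real.log_le_log hg4pos hb.1
    have h2 : Real.log (g n / 4) = Real.log n * (1 + Real.log (p n) / Real.log n) - Real.log 4 := by
      rw [Real.log_div (ne_of_gt (hg_pos n (by omega))) (by norm_num), hlogg n hn]
    have heq : 1 + Real.log (p n) / Real.log n - Real.log 4 / Real.log n
        = (Real.log n * (1 + Real.log (p n) / Real.log n) - Real.log 4) / Real.log n := by
      field_simp
    rw [hprob n hn, heq]
    apply (div_le_div_iff_of_pos_right hlogn_pos).mpr
    rw [← h2]; exact h1
  · -- upper bound eventually
    filter_upwards [eventually_ge_atTop 2, hbounds] with n hn hb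
    have hlogn_pos : 0 < Real.log n :=
      Real.log_pos (by exact_mod_cast hn.trans_lt' one_lt_two)
    have hr_pos : 0 < 1 - (1 - p n) ^ n := by
      have := hg_pos n (by omega); linarith [hb.1]
    have h1 : Real.log (1 - (1 - p n) ^ n) ≤ Real.log (g n) :=
      Real.log_le_log hr_pos hb.2
    have heq : 1 + Real.log (p n) / Real.log n
        = Real.log n * (1 + Real.log (p n) / Real.log n) / Real.log n := by
      field_simp
    rw [hprob n hn, heq]
    apply (div_le_div_iff_of_pos_right hlogn_pos).mpr
    rw [← hlogg n hn]; exact h1
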